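/- For every k ≥ 1 and all p, q ∈ D(k) with p ≠ q, the loop distance d(p,q) equals the minimal l ≥ 1 for which there exists a sequence p = p₀, p₁, …, p_l = q in D(k) with d(p_{i−1}, p_i) = 1 for every 1 ≤ i ≤ l (equivalently, with p_{i−1} and p_i having all strings identical except two of them). -/

import Mathlib

open scoped BigOperators

/-- Non-crossing pair partitions of {1,…,2k}: fixed-point-free non-crossing
involutions of `Fin (2*k)`. -/
def NCPair (k : ℕ) : Type :=
  {p : Equiv.Perm (Fin (2 * k)) //
    (∀ x, p (p x) = x) ∧ (∀ x, p x ≠ x) ∧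
    ∀ a b c d : Fin (2 * k), a < b → b < c → c < d → p a = c → p b = d → False}

instance (k : ℕ) : Fintype (NCPair k) := by unfold NCPair; infer_instance

instance (k : ℕ) : DecidableEq (NCPair k) := by unfold NCPair; infer_instance

/-- `loops p q`: the number of loops obtained by closing the composed diagram,
i.e. the number of orbits of the subgroup generated by `p` and `q` on `Fin (2*k)`. -/
noncomputable def loops {k : ℕ} (p q : NCPair k) : ℕ :=
  Nat.card (MulAction.orbitRel.Quotient
    (↥(Subgroup.closure ({p.1, q.1} : Set (Equiv.Perm (Fin (2 * k)))))) (Fin (2 * k)))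

/-- The Gram matrix `G_{kn}(p,q) = n^{l(p,q)}`. -/
noncomputable def Gram (k n : ℕ) : Matrix (NCPair k) (NCPair k) ℝ :=
  fun p q => (n : ℝ) ^ loops p q

/-- The loop distance `d(p,q) = k - l(p,q)`. -/
noncomputable def loopDist {k : ℕ} (p q : NCPair k) : ℕ := k - loops p q

namespace NCAux

open MulAction Equiv

set_option linter.unusedSectionVars false

variable {α : Type*} [Fintype α] [DecidableEq α]

/-- The submodule of functions invariant under every permutation in `S`. -/
def fixSub (S : Set (Equiv.Perm α)) : Submodule ℚ (α → ℚ) where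
  carrier := {f | ∀ σ ∈ S, ∀ x, f (σ x) = f x}
  add_mem' := by intro f g hf hg σ hσ x; simp only [Pi.add_apply, hf σ hσ x, hg σ hσ x]
  zero_mem' := by intro σ hσ x; rfl
  smul_mem' := by intro c f hf σ hσ x; simp only [Pi.smul_apply, hf σ hσ x]

lemma mem_fixSub {S : Set (Equiv.Perm α)} {f : α → ℚ} :
    f ∈ fixSub S ↔ ∀ σ ∈ S, ∀ x, f (σ x) = f x := Iff.rfl

lemma fixSub_antitone {S T : Set (Equiv.Perm α)} (h : S ⊆ T) : fixSub T ≤ fixSub S :=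
  fun _ hf σ hσ x => hf σ (h hσ) x

lemma fixSub_union (S T : Set (Equiv.Perm α)) : fixSub (S ∪ T) = fixSub S ⊓ fixSub T := by
  ext f
  constructor
  · intro hf
    exact ⟨fun σ hσ x => hf σ (Or.inl hσ) x, fun σ hσ x => hf σ (Or.inr hσ) x⟩
  · rintro ⟨h1, h2⟩ σ hσ x
    rcases hσ with hσ | hσ
    · exact h1 σ hσ x
    · exact h2 σ hσ x

lemma fixSub_closure {S : Set (Equiv.Perm α)} {f : α → ℚ} (hf : f ∈ fixSub S) :
    ∀ g ∈ Subgroup.closure S, ∀ x, f (g x) = f x := by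
  intro g hg
  induction hg using Subgroup.closure_induction with
  | mem σ hσ => exact hf σ hσ
  | one => intro x; rfl
  | mul σ τ hσ hτ h1 h2 => intro x; rw [Equiv.Perm.mul_apply, h1 (τ x), h2 x]
  | inv σ hσ h1 => intro x; conv_rhs => rw [show x = σ (σ⁻¹ x) by simp]
                   exact (h1 (σ⁻¹ x)).symm

/-- The fixed submodule of `S` is linearly equivalent to functions on the orbit space of
the closure of `S`. -/
noncomputable def fixEquiv (S : Set (Equiv.Perm α)) :
    ((orbitRel.Quotient (↥(Subgroup.closure S)) α) → ℚ) ≃ₗ[ℚ] fixSub S := by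
  refine LinearEquiv.ofLinear
    { toFun := fun g => ⟨fun x => g (Quotient.mk'' x), ?_⟩
      map_add' := ?_
      map_smul' := ?_ }
    { toFun := fun f => fun ω => Quotient.liftOn' ω f.1 ?_
      map_add' := ?_
      map_smul' := ?_ } ?_ ?_
  · intro σ hσ x
    exact congrArg g (Quotient.sound' ⟨⟨σ, Subgroup.subset_closure hσ⟩, rfl⟩)
  · intro g h; rfl
  · intro c g; rfl
  · intro x y hxy
    obtain ⟨g, rfl⟩ := hxy
    exact fixSub_closure f.2 g g.2 y
  · intro f g; ext ω; induction ω using Quotient.inductionOn' with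
    | h x => rfl
  · intro c f; ext ω; induction ω using Quotient.inductionOn' with
    | h x => rfl
  · ext f x
    rfl
  · ext g ω
    induction ω using Quotient.inductionOn' with
    | h x => rfl

lemma finrank_fixSub (S : Set (Equiv.Perm α)) :
    Module.finrank ℚ (fixSub S) =
      Nat.card (orbitRel.Quotient (↥(Subgroup.closure S)) α) := by
  classical
  letI : Fintype (orbitRel.Quotient (↥(Subgroup.closure S)) α) := Fintype.ofFinite _
  rw [← (fixEquiv S).finrank_eq, Module.finrank_pi, Nat.card_eq_fintype_card]



open MulAction Equiv

set_option linter.unusedSectionVars false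

variable {α : Type*} [Fintype α] [DecidableEq α]

lemma inv_eq_self {σ : Equiv.Perm α} (h : ∀ x, σ (σ x) = x) : σ⁻¹ = σ := by
  ext x
  conv_lhs => rw [← h x]
  simp

lemma closure_maps_to {S : Set (Perm α)} (T : Set α)
    (hS : ∀ σ ∈ S, (∀ x ∈ T, σ x ∈ T) ∧ (∀ x ∈ T, σ⁻¹ x ∈ T)) :
    ∀ g ∈ Subgroup.closure S, (∀ x ∈ T, g x ∈ T) ∧ (∀ x ∈ T, g⁻¹ x ∈ T) := by
  intro g hg
  induction hg using Subgroup.closure_induction with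
  | mem σ hσ => exact hS σ hσ
  | one => simp
  | mul σ τ _ _ h1 h2 =>
      refine ⟨fun x hx => ?_, fun x hx => ?_⟩
      · rw [Equiv.Perm.mul_apply]; exact h1.1 _ (h2.1 x hx)
      · rw [mul_inv_rev, Equiv.Perm.mul_apply]; exact h2.2 _ (h1.2 x hx)
  | inv σ _ h1 => exact ⟨h1.2, by simpa using h1.1⟩

lemma orbit_subset_of_invariant {S : Set (Perm α)} {T : Set α}
    (hS : ∀ σ ∈ S, (∀ x ∈ T, σ x ∈ T) ∧ (∀ x ∈ T, σ⁻¹ x ∈ T))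
    {x : α} (hx : x ∈ T) : orbit (↥(Subgroup.closure S)) x ⊆ T := by
  rintro y ⟨g, rfl⟩
  exact (closure_maps_to T hS g g.2).1 x hx

lemma gen_mem_orbit {S : Set (Perm α)} {σ : Perm α} (hσ : σ ∈ S) (x : α) :
    σ x ∈ orbit (↥(Subgroup.closure S)) x :=
  ⟨⟨σ, Subgroup.subset_closure hσ⟩, rfl⟩

lemma nat_card_eq_sum_orbits (H : Subgroup (Perm α)) [Fintype (orbitRel.Quotient H α)] :
    Fintype.card α = ∑ ω : orbitRel.Quotient H α, Nat.card ω.orbit := by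
  classical
  rw [← Nat.card_eq_fintype_card, Nat.card_congr (selfEquivSigmaOrbits' H α)]
  letI : ∀ ω : orbitRel.Quotient H α, Fintype ω.orbit := fun ω => Fintype.ofFinite _
  rw [Nat.card_eq_fintype_card, Fintype.card_sigma]
  exact Finset.sum_congr rfl fun ω _ => (Nat.card_eq_fintype_card).symm

lemma orbit_trans {G : Type*} [Group G] {β : Type*} [MulAction G β] {x y z : β}
    (h1 : x ∈ MulAction.orbit G y) (h2 : y ∈ MulAction.orbit G z) :
    x ∈ MulAction.orbit G z := by
  rw [← MulAction.orbit_eq_iff.mpr h2]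
  exact h1

lemma orbit_symm {G : Type*} [Group G] {β : Type*} [MulAction G β] {x y : β}
    (h : x ∈ MulAction.orbit G y) : y ∈ MulAction.orbit G x := by
  rw [MulAction.orbit_eq_iff.mpr h]
  exact MulAction.mem_orbit_self y

lemma closure_orbit_sub {S : Set (Perm α)} {H' : Subgroup (Perm α)}
    (hS : ∀ σ ∈ S, ∀ y, σ y ∈ MulAction.orbit (↥H') y ∧ σ⁻¹ y ∈ MulAction.orbit (↥H') y) :
    ∀ g ∈ Subgroup.closure S, ∀ y,
      g y ∈ MulAction.orbit (↥H') y ∧ g⁻¹ y ∈ MulAction.orbit (↥H') y := by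
  intro g hg
  induction hg using Subgroup.closure_induction with
  | mem σ hσ => exact hS σ hσ
  | one =>
      intro y
      simp only [Equiv.Perm.one_apply, inv_one]
      exact ⟨MulAction.mem_orbit_self y, MulAction.mem_orbit_self y⟩
  | mul σ τ _ _ h1 h2 =>
      intro y
      constructor
      · rw [Equiv.Perm.mul_apply]
        exact orbit_trans ((h1 (τ y)).1) ((h2 y).1)
      · rw [mul_inv_rev, Equiv.Perm.mul_apply]
        exact orbit_trans ((h2 (σ⁻¹ y)).2) ((h1 y).2)
  | inv σ _ h1 =>
      intro y
      exact ⟨(h1 y).2, by simpa using (h1 y).1⟩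

lemma card_eq_of_orbit_sizes {H : Subgroup (Perm α)}
    (ω₀ : orbitRel.Quotient H α)
    (h₀ : Nat.card ω₀.orbit = 4)
    (h₂ : ∀ ω : orbitRel.Quotient H α, ω ≠ ω₀ → Nat.card ω.orbit = 2) :
    Fintype.card α = 2 * Nat.card (orbitRel.Quotient H α) + 2 := by
  classical
  letI : Fintype (orbitRel.Quotient H α) := Fintype.ofFinite _
  rw [nat_card_eq_sum_orbits H]
  rw [← Finset.sum_erase_add _ _ (Finset.mem_univ ω₀), h₀]
  have hc : ∀ ω ∈ Finset.univ.erase ω₀,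
      Nat.card (orbitRel.Quotient.orbit ω) = 2 :=
    fun ω hω => h₂ ω (Finset.ne_of_mem_erase hω)
  rw [Finset.sum_congr rfl hc, Finset.sum_const,
    Finset.card_erase_of_mem (Finset.mem_univ _), Finset.card_univ, smul_eq_mul,
    Nat.card_eq_fintype_card]
  have hN : 1 ≤ Fintype.card (orbitRel.Quotient H α) :=
    Fintype.card_pos_iff.mpr ⟨ω₀⟩
  omega

lemma quot_orbit_eq {H : Subgroup (Perm α)} {ω : orbitRel.Quotient H α} {x : α}
    (hx : x ∈ ω.orbit) : ω.orbit = orbit H x := by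
  rw [orbitRel.Quotient.mem_orbit] at hx
  rw [← hx, orbitRel.Quotient.orbit_mk]

lemma out_mem_orbit {H : Subgroup (Perm α)} (ω : orbitRel.Quotient H α) :
    Quotient.out ω ∈ ω.orbit := by
  rw [orbitRel.Quotient.mem_orbit]
  exact Quotient.out_eq' ω

section Counting

variable {k : ℕ}

lemma ncp_exists_ne {p q : NCPair k} (h : p ≠ q) : ∃ x, p.1 x ≠ q.1 x := by
  by_contra hc
  push_neg at hc
  exact h (Subtype.ext (Equiv.ext hc))

lemma loops_def (p q : NCPair k) :
    loops p q = Nat.card (orbitRel.Quotient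
      (↥(Subgroup.closure ({p.1, q.1} : Set (Perm (Fin (2 * k)))))) (Fin (2 * k))) := rfl

lemma loops_le (p q : NCPair k) : loops p q ≤ k := by
  classical
  set S : Set (Perm (Fin (2 * k))) := {p.1, q.1} with hS
  set H := Subgroup.closure S with hH
  letI : Fintype (orbitRel.Quotient (↥H) (Fin (2 * k))) := Fintype.ofFinite _
  have hsum := nat_card_eq_sum_orbits (α := Fin (2 * k)) H
  have hlb : ∀ ω : orbitRel.Quotient (↥H) (Fin (2 * k)), 2 ≤ Nat.card ω.orbit := by
    intro ω
    have hx := out_mem_orbit ω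
    have horb := quot_orbit_eq hx
    have hsub : ({Quotient.out ω, p.1 (Quotient.out ω)} : Set (Fin (2 * k))) ⊆ ω.orbit := by
      rw [horb]
      rw [Set.insert_subset_iff, Set.singleton_subset_iff]
      have hm1 : p.1 ∈ S := by rw [hS]; exact Set.mem_insert _ _
      exact ⟨MulAction.mem_orbit_self _, gen_mem_orbit hm1 _⟩
    calc (2 : ℕ) = ({Quotient.out ω, p.1 (Quotient.out ω)} : Set (Fin (2 * k))).ncard :=
          (Set.ncard_pair (Ne.symm (p.2.2.1 _))).symm
      _ ≤ ω.orbit.ncard := Set.ncard_le_ncard hsub (Set.toFinite _)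
      _ = Nat.card ω.orbit := (Nat.card_coe_set_eq _).symm
  have h2 : Fintype.card (orbitRel.Quotient (↥H) (Fin (2 * k))) * 2 ≤ 2 * k := by
    calc Fintype.card (orbitRel.Quotient (↥H) (Fin (2 * k))) * 2
        = ∑ _ω : orbitRel.Quotient (↥H) (Fin (2 * k)), 2 := by
          rw [Finset.sum_const, Finset.card_univ, smul_eq_mul]
      _ ≤ ∑ ω : orbitRel.Quotient (↥H) (Fin (2 * k)), Nat.card ω.orbit :=
          Finset.sum_le_sum (fun ω _ => hlb ω)
      _ = Fintype.card (Fin (2 * k)) := hsum.symm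
      _ = 2 * k := by simp
  have h3 : loops p q = Fintype.card (orbitRel.Quotient (↥H) (Fin (2 * k))) := by
    rw [loops_def, Nat.card_eq_fintype_card]
  omega

lemma loops_lt {p q : NCPair k} (h : p ≠ q) : loops p q + 1 ≤ k := by
  classical
  obtain ⟨x₀, hx₀⟩ := ncp_exists_ne h
  set S : Set (Perm (Fin (2 * k))) := {p.1, q.1} with hS
  set H := Subgroup.closure S with hH
  letI : Fintype (orbitRel.Quotient (↥H) (Fin (2 * k))) := Fintype.ofFinite _
  have hsum := nat_card_eq_sum_orbits (α := Fin (2 * k)) H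
  have hlb : ∀ ω : orbitRel.Quotient (↥H) (Fin (2 * k)), 2 ≤ Nat.card ω.orbit := by
    intro ω
    have hx := out_mem_orbit ω
    have horb := quot_orbit_eq hx
    have hsub : ({Quotient.out ω, p.1 (Quotient.out ω)} : Set (Fin (2 * k))) ⊆ ω.orbit := by
      rw [horb]
      rw [Set.insert_subset_iff, Set.singleton_subset_iff]
      have hm1 : p.1 ∈ S := by rw [hS]; exact Set.mem_insert _ _
      exact ⟨MulAction.mem_orbit_self _, gen_mem_orbit hm1 _⟩
    calc (2 : ℕ) = ({Quotient.out ω, p.1 (Quotient.out ω)} : Set (Fin (2 * k))).ncard :=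
          (Set.ncard_pair (Ne.symm (p.2.2.1 _))).symm
      _ ≤ ω.orbit.ncard := Set.ncard_le_ncard hsub (Set.toFinite _)
      _ = Nat.card ω.orbit := (Nat.card_coe_set_eq _).symm
  set ω₀ : orbitRel.Quotient (↥H) (Fin (2 * k)) := Quotient.mk'' x₀ with hω₀
  have hmem : x₀ ∈ ω₀.orbit := by
    rw [orbitRel.Quotient.mem_orbit]
  have horb₀ := quot_orbit_eq hmem
  have h3 : 3 ≤ Nat.card ω₀.orbit := by
    have hsub : ({x₀, p.1 x₀, q.1 x₀} : Set (Fin (2 * k))) ⊆ ω₀.orbit := by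
      rw [horb₀]
      rw [Set.insert_subset_iff, Set.insert_subset_iff, Set.singleton_subset_iff]
      have hm1 : p.1 ∈ S := by rw [hS]; exact Set.mem_insert _ _
      have hm2 : q.1 ∈ S := by rw [hS]; exact Set.mem_insert_of_mem _ rfl
      refine ⟨MulAction.mem_orbit_self _, ?_, ?_⟩
      · exact gen_mem_orbit hm1 x₀
      · exact gen_mem_orbit hm2 x₀
    have h3' : ({x₀, p.1 x₀, q.1 x₀} : Set (Fin (2 * k))).ncard = 3 :=
      Set.ncard_eq_three.mpr ⟨x₀, p.1 x₀, q.1 x₀,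
        Ne.symm (p.2.2.1 x₀), Ne.symm (q.2.2.1 x₀), hx₀, rfl⟩
    calc (3 : ℕ) = _ := h3'.symm
      _ ≤ ω₀.orbit.ncard := Set.ncard_le_ncard hsub (Set.toFinite _)
      _ = Nat.card ω₀.orbit := (Nat.card_coe_set_eq _).symm
  have hstrict : (∑ _ω : orbitRel.Quotient (↥H) (Fin (2 * k)), 2) <
      ∑ ω : orbitRel.Quotient (↥H) (Fin (2 * k)), Nat.card ω.orbit := by
    refine Finset.sum_lt_sum (fun ω _ => hlb ω) ⟨ω₀, Finset.mem_univ _, by omega⟩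
  have h2 : Fintype.card (orbitRel.Quotient (↥H) (Fin (2 * k))) * 2 + 1 ≤ 2 * k := by
    have e1 : (∑ _ω : orbitRel.Quotient (↥H) (Fin (2 * k)), 2)
        = Fintype.card (orbitRel.Quotient (↥H) (Fin (2 * k))) * 2 := by
      rw [Finset.sum_const, Finset.card_univ, smul_eq_mul]
    have e2 : (∑ ω : orbitRel.Quotient (↥H) (Fin (2 * k)), Nat.card ω.orbit) = 2 * k := by
      rw [← hsum]; simp
    omega
  have h3 : loops p q = Fintype.card (orbitRel.Quotient (↥H) (Fin (2 * k))) := by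
    rw [loops_def, Nat.card_eq_fintype_card]
  omega

lemma loops_self (q : NCPair k) : loops q q = k := by
  classical
  set S : Set (Perm (Fin (2 * k))) := {q.1, q.1} with hS
  set H := Subgroup.closure S with hH
  letI : Fintype (orbitRel.Quotient (↥H) (Fin (2 * k))) := Fintype.ofFinite _
  have hsum := nat_card_eq_sum_orbits (α := Fin (2 * k)) H
  have hgen : ∀ σ ∈ S, σ = q.1 := by
    intro σ hσ
    rcases hσ with hσ | hσ
    · exact hσ
    · exact hσ
  have hexact : ∀ ω : orbitRel.Quotient (↥H) (Fin (2 * k)), Nat.card ω.orbit = 2 := by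
    intro ω
    have hx := out_mem_orbit ω
    have horb := quot_orbit_eq hx
    set x := Quotient.out ω
    have hsub1 : ω.orbit ⊆ ({x, q.1 x} : Set (Fin (2 * k))) := by
      rw [horb, hH]
      refine orbit_subset_of_invariant ?_ (Set.mem_insert _ _)
      intro σ hσ
      rw [hgen σ hσ]
      have hinv : (q.1)⁻¹ = q.1 := inv_eq_self q.2.1
      constructor
      · rintro y (rfl | rfl)
        · exact Set.mem_insert_of_mem _ rfl
        · rw [q.2.1]; exact Set.mem_insert _ _
      · rw [hinv]
        rintro y (rfl | rfl)
        · exact Set.mem_insert_of_mem _ rfl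
        · rw [q.2.1]; exact Set.mem_insert _ _
    have hsub2 : ({x, q.1 x} : Set (Fin (2 * k))) ⊆ ω.orbit := by
      rw [horb]
      rw [Set.insert_subset_iff, Set.singleton_subset_iff]
      have hm2 : q.1 ∈ S := by rw [hS]; exact Set.mem_insert_of_mem _ rfl
      exact ⟨MulAction.mem_orbit_self _, gen_mem_orbit hm2 _⟩
    have : ω.orbit = ({x, q.1 x} : Set (Fin (2 * k))) := Set.Subset.antisymm hsub1 hsub2
    rw [this, Nat.card_coe_set_eq, Set.ncard_pair (Ne.symm (q.2.2.1 x))]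
  have h2 : Fintype.card (orbitRel.Quotient (↥H) (Fin (2 * k))) * 2 = 2 * k := by
    calc Fintype.card (orbitRel.Quotient (↥H) (Fin (2 * k))) * 2
        = ∑ ω : orbitRel.Quotient (↥H) (Fin (2 * k)), Nat.card ω.orbit := by
          rw [Finset.sum_congr rfl (fun ω _ => hexact ω), Finset.sum_const,
            Finset.card_univ, smul_eq_mul]
      _ = Fintype.card (Fin (2 * k)) := hsum.symm
      _ = 2 * k := by simp
  have h3 : loops q q = Fintype.card (orbitRel.Quotient (↥H) (Fin (2 * k))) := by
    rw [loops_def, Nat.card_eq_fintype_card]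
  omega

lemma loops_triangle (p r q : NCPair k) : loops p r + loops r q ≤ k + loops p q := by
  classical
  have h1 : loops p r = Module.finrank ℚ (fixSub ({p.1, r.1} : Set (Perm (Fin (2 * k))))) :=
    (finrank_fixSub _).symm
  have h2 : loops r q = Module.finrank ℚ (fixSub ({r.1, q.1} : Set (Perm (Fin (2 * k))))) :=
    (finrank_fixSub _).symm
  have h3 : loops p q = Module.finrank ℚ (fixSub ({p.1, q.1} : Set (Perm (Fin (2 * k))))) :=
    (finrank_fixSub _).symm
  have h4 : loops r r = Module.finrank ℚ (fixSub ({r.1, r.1} : Set (Perm (Fin (2 * k))))) :=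
    (finrank_fixSub _).symm
  set A := fixSub ({p.1, r.1} : Set (Perm (Fin (2 * k)))) with hA
  set B := fixSub ({r.1, q.1} : Set (Perm (Fin (2 * k)))) with hB
  have hinf : A ⊓ B ≤ fixSub ({p.1, q.1} : Set (Perm (Fin (2 * k)))) := by
    rw [hA, hB, ← fixSub_union]
    apply fixSub_antitone
    rintro σ (rfl | rfl)
    · exact Or.inl (Set.mem_insert _ _)
    · exact Or.inr (Set.mem_insert_of_mem _ rfl)
  have hsup : A ⊔ B ≤ fixSub ({r.1, r.1} : Set (Perm (Fin (2 * k)))) := by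
    refine sup_le (fixSub_antitone ?_) (fixSub_antitone ?_)
    · rintro σ (rfl | rfl) <;> exact Set.mem_insert_of_mem _ rfl
    · rintro σ (rfl | rfl) <;> exact Set.mem_insert _ _
  have key := Submodule.finrank_sup_add_finrank_inf_eq A B
  have m1 : Module.finrank ℚ ↥(A ⊓ B) ≤
      Module.finrank ℚ (fixSub ({p.1, q.1} : Set (Perm (Fin (2 * k))))) :=
    Submodule.finrank_mono hinf
  have m2 : Module.finrank ℚ ↥(A ⊔ B) ≤
      Module.finrank ℚ (fixSub ({r.1, r.1} : Set (Perm (Fin (2 * k))))) :=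
    Submodule.finrank_mono hsup
  have h5 : loops r r = k := loops_self r
  omega

end Counting

section NC

variable {n : ℕ}

lemma nc_between {f : Equiv.Perm (Fin n)}
    (hnc : ∀ a b c d : Fin n, a < b → b < c → c < d → f a = c → f b = d → False)
    (hinv : ∀ x, f (f x) = x)
    {x y : Fin n} (h1 : x < y) (h2 : y < f x) : x < f y ∧ f y < f x := by
  have hne1 : f y ≠ x := by
    intro h
    have : y = f x := by rw [← hinv y, h]
    exact absurd h2 (by rw [this]; exact lt_irrefl _)
  rcases lt_trichotomy (f y) x with h | h | h
  · exact absurd (hnc (f y) x y (f x) h h1 h2 (hinv y) rfl) not_false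
  · exact absurd h hne1
  · refine ⟨h, ?_⟩
    rcases lt_trichotomy (f y) (f x) with h' | h' | h'
    · exact h'
    · exact absurd (f.injective h') (ne_of_gt h1)
    · exact absurd (hnc x y (f x) (f y) h1 h2 h' rfl rfl) not_false

lemma nc_of_between {f : Equiv.Perm (Fin n)}
    (h : ∀ x y : Fin n, x < y → y < f x → x < f y ∧ f y < f x) :
    ∀ a b c d : Fin n, a < b → b < c → c < d → f a = c → f b = d → False := by
  intro a b c d hab hbc hcd hfa hfb
  have h2 : b < f a := by rw [hfa]; exact hbc
  have := (h a b hab h2).2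
  rw [hfb, hfa] at this
  exact absurd hcd (not_lt.mpr (le_of_lt this))

end NC

section Step

variable {k : ℕ}

lemma exists_step {p q : NCPair k} (hpq : p ≠ q) :
    ∃ r : NCPair k, loops p r = k - 1 ∧ loops r q = loops p q + 1 := by
  classical
  have hPinv := p.2.1
  have hPfp := p.2.2.1
  have hPnc := p.2.2.2
  have hQinv := q.2.1
  have hQfp := q.2.2.1
  have hQnc := q.2.2.2
  -- find a minimal q-pair (a,b) not shared by p
  have hSne : ∃ z : Fin (2*k) × Fin (2*k), z.1 < z.2 ∧ q.1 z.1 = z.2 ∧ p.1 z.1 ≠ z.2 := by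
    obtain ⟨x, hx⟩ := ncp_exists_ne hpq
    rcases lt_trichotomy x (q.1 x) with h | h | h
    · exact ⟨(x, q.1 x), h, rfl, fun hc => hx (hc.trans rfl)⟩
    · exact absurd h.symm (hQfp x)
    · refine ⟨(q.1 x, x), h, hQinv x, fun hc => ?_⟩
      have hc' : p.1 (q.1 x) = x := hc
      have h6 := congrArg p.1 hc'
      simp only [hPinv] at h6
      exact hx h6.symm
  obtain ⟨⟨a, b⟩, hzmem, hzmin⟩ := Finset.exists_min_image
    (Finset.univ.filter
      (fun z : Fin (2*k) × Fin (2*k) => z.1 < z.2 ∧ q.1 z.1 = z.2 ∧ p.1 z.1 ≠ z.2))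
    (fun z => (z.2 : ℕ) - (z.1 : ℕ))
    (by obtain ⟨z, hz⟩ := hSne
        exact ⟨z, Finset.mem_filter.mpr ⟨Finset.mem_univ _, hz⟩⟩)
  rw [Finset.mem_filter] at hzmem
  obtain ⟨-, hab, hQa, hPa⟩ := hzmem
  dsimp only at hab hQa hPa
  have hmin : ∀ c d : Fin (2*k), c < d → q.1 c = d → p.1 c ≠ d →
      (b : ℕ) - (a : ℕ) ≤ (d : ℕ) - (c : ℕ) := by
    intro c d h1 h2 h3
    exact hzmin (c, d) (Finset.mem_filter.mpr ⟨Finset.mem_univ _, h1, h2, h3⟩)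
  have hQb : q.1 b = a := by rw [← hQa, hQinv]
  -- interior structure
  have hq_int : ∀ c, a < c → c < b → a < q.1 c ∧ q.1 c < b := by
    intro c h1 h2
    have h2' : c < q.1 a := by rw [hQa]; exact h2
    have := nc_between hQnc hQinv h1 h2'
    rwa [hQa] at this
  have hpq_int : ∀ c, a < c → c < b → p.1 c = q.1 c := by
    intro c h1 h2
    by_contra hne2
    obtain ⟨hq1, hq2⟩ := hq_int c h1 h2
    rcases lt_trichotomy c (q.1 c) with h | h | h
    · have hm := hmin c (q.1 c) h rfl hne2
      have v1 : (a : ℕ) < (c : ℕ) := h1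
      have v2 : (c : ℕ) < (q.1 c : ℕ) := h
      have v3 : (a : ℕ) < (q.1 c : ℕ) := hq1
      have v4 : (q.1 c : ℕ) < (b : ℕ) := hq2
      omega
    · exact hQfp c h.symm
    · have hm := hmin (q.1 c) c h (hQinv c) (fun hc => hne2 (by
        have h6 := congrArg p.1 hc
        simp only [hPinv] at h6
        exact h6.symm))
      have v1 : (a : ℕ) < (q.1 c : ℕ) := hq1
      have v2 : (q.1 c : ℕ) < (c : ℕ) := h
      have v3 : (c : ℕ) < (b : ℕ) := h2
      omega
  have hp_int : ∀ c, a < c → c < b → a < p.1 c ∧ p.1 c < b := by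
    intro c h1 h2
    rw [hpq_int c h1 h2]
    exact hq_int c h1 h2
  have hPa_out : ¬(a ≤ p.1 a ∧ p.1 a ≤ b) := by
    rintro ⟨h1, h2⟩
    rcases eq_or_lt_of_le h1 with h1' | h1'
    · exact hPfp a h1'.symm
    rcases eq_or_lt_of_le h2 with h2' | h2'
    · exact hPa h2'
    have h6 := hpq_int (p.1 a) h1' h2'
    simp only [hPinv] at h6
    have h7 := congrArg q.1 h6
    simp only [hQinv] at h7
    rw [hQa] at h7
    exact hPa h7.symm
  have hPb_out : ¬(a ≤ p.1 b ∧ p.1 b ≤ b) := by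
    rintro ⟨h1, h2⟩
    rcases eq_or_lt_of_le h2 with h2' | h2'
    · exact hPfp b h2'
    rcases eq_or_lt_of_le h1 with h1' | h1'
    · exact hPa (by rw [h1', hPinv])
    have h6 := hpq_int (p.1 b) h1' h2'
    simp only [hPinv] at h6
    have h7 := congrArg q.1 h6
    simp only [hQinv] at h7
    rw [hQb] at h7
    have h8 := congrArg p.1 h7
    simp only [hPinv] at h8
    exact hPa h8
  -- distinctness of the four points
  have hne_ab : a ≠ b := ne_of_lt hab
  have hne_aPa : a ≠ p.1 a := fun h => hPfp a h.symm
  have hne_aPb : a ≠ p.1 b := fun h => hPa (by rw [h, hPinv])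
  have hne_bPa : b ≠ p.1 a := fun h => hPa h.symm
  have hne_bPb : b ≠ p.1 b := fun h => hPfp b h.symm
  have hne_PaPb : p.1 a ≠ p.1 b := fun h => hne_ab (p.1.injective h)
  -- the rewired permutation
  set rr : Perm (Fin (2*k)) := p.1 * (Equiv.swap a (p.1 b)) * (Equiv.swap b (p.1 a)) with hrr
  have hr_a : rr a = b := by
    rw [hrr, Equiv.Perm.mul_apply, Equiv.Perm.mul_apply,
      Equiv.swap_apply_of_ne_of_ne hne_ab hne_aPa, Equiv.swap_apply_left, hPinv]
  have hr_b : rr b = a := by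
    rw [hrr, Equiv.Perm.mul_apply, Equiv.Perm.mul_apply, Equiv.swap_apply_left,
      Equiv.swap_apply_of_ne_of_ne (Ne.symm hne_aPa) hne_PaPb, hPinv]
  have hr_Pa : rr (p.1 a) = p.1 b := by
    rw [hrr, Equiv.Perm.mul_apply, Equiv.Perm.mul_apply, Equiv.swap_apply_right,
      Equiv.swap_apply_of_ne_of_ne (Ne.symm hne_ab) hne_bPb]
  have hr_Pb : rr (p.1 b) = p.1 a := by
    rw [hrr, Equiv.Perm.mul_apply, Equiv.Perm.mul_apply,
      Equiv.swap_apply_of_ne_of_ne (Ne.symm hne_bPb) (Ne.symm hne_PaPb),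
      Equiv.swap_apply_right]
  have hr_ne : ∀ x, x ≠ a → x ≠ b → x ≠ p.1 a → x ≠ p.1 b → rr x = p.1 x := by
    intro x h1 h2 h3 h4
    rw [hrr, Equiv.Perm.mul_apply, Equiv.Perm.mul_apply,
      Equiv.swap_apply_of_ne_of_ne h2 h3, Equiv.swap_apply_of_ne_of_ne h1 h4]
  have hP_ne : ∀ x : Fin (2*k), x ≠ a → x ≠ b → x ≠ p.1 a → x ≠ p.1 b →
      p.1 x ≠ a ∧ p.1 x ≠ b ∧ p.1 x ≠ p.1 a ∧ p.1 x ≠ p.1 b := by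
    intro x h1 h2 h3 h4
    refine ⟨fun h => h3 (by rw [← h, hPinv]), fun h => h4 (by rw [← h, hPinv]),
      fun h => h1 (p.1.injective h), fun h => h2 (p.1.injective h)⟩
  have hr_inv : ∀ x, rr (rr x) = x := by
    intro x
    by_cases h1 : x = a
    · rw [h1, hr_a, hr_b]
    by_cases h2 : x = b
    · rw [h2, hr_b, hr_a]
    by_cases h3 : x = p.1 a
    · rw [h3, hr_Pa, hr_Pb]
    by_cases h4 : x = p.1 b
    · rw [h4, hr_Pb, hr_Pa]
    obtain ⟨k1, k2, k3, k4⟩ := hP_ne x h1 h2 h3 h4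
    rw [hr_ne x h1 h2 h3 h4, hr_ne _ k1 k2 k3 k4, hPinv]
  have hr_fp : ∀ x, rr x ≠ x := by
    intro x
    by_cases h1 : x = a
    · rw [h1, hr_a]; exact Ne.symm hne_ab
    by_cases h2 : x = b
    · rw [h2, hr_b]; exact hne_ab
    by_cases h3 : x = p.1 a
    · rw [h3, hr_Pa]; exact Ne.symm hne_PaPb
    by_cases h4 : x = p.1 b
    · rw [h4, hr_Pb]; exact hne_PaPb
    rw [hr_ne x h1 h2 h3 h4]; exact hPfp x
  -- interval stability
  have hr_in : ∀ x, a ≤ x → x ≤ b → a ≤ rr x ∧ rr x ≤ b := by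
    intro x h1 h2
    by_cases hxa : x = a
    · rw [hxa, hr_a]; exact ⟨le_of_lt hab, le_refl b⟩
    by_cases hxb : x = b
    · rw [hxb, hr_b]; exact ⟨le_refl a, le_of_lt hab⟩
    have h1' : a < x := lt_of_le_of_ne h1 (fun h => hxa h.symm)
    have h2' : x < b := lt_of_le_of_ne h2 hxb
    have hx3 : x ≠ p.1 a := by intro h; exact hPa_out (by rw [← h]; exact ⟨h1, h2⟩)
    have hx4 : x ≠ p.1 b := by intro h; exact hPb_out (by rw [← h]; exact ⟨h1, h2⟩)
    rw [hr_ne x hxa hxb hx3 hx4]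
    obtain ⟨u1, u2⟩ := hp_int x h1' h2'
    exact ⟨le_of_lt u1, le_of_lt u2⟩
  have hq_in : ∀ x, a ≤ x → x ≤ b → a ≤ q.1 x ∧ q.1 x ≤ b := by
    intro x h1 h2
    by_cases hxa : x = a
    · rw [hxa, hQa]; exact ⟨le_of_lt hab, le_refl b⟩
    by_cases hxb : x = b
    · rw [hxb, hQb]; exact ⟨le_refl a, le_of_lt hab⟩
    have h1' : a < x := lt_of_le_of_ne h1 (fun h => hxa h.symm)
    have h2' : x < b := lt_of_le_of_ne h2 hxb
    obtain ⟨u1, u2⟩ := hq_int x h1' h2'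
    exact ⟨le_of_lt u1, le_of_lt u2⟩
  have hP_out : ∀ x, ¬(a ≤ x ∧ x ≤ b) → x ≠ p.1 a → x ≠ p.1 b →
      ¬(a ≤ p.1 x ∧ p.1 x ≤ b) := by
    rintro x hx hx3 hx4 ⟨h1, h2⟩
    rcases eq_or_lt_of_le h1 with h1' | h1'
    · exact hx3 (by rw [h1', hPinv])
    rcases eq_or_lt_of_le h2 with h2' | h2'
    · exact hx4 (by rw [← h2', hPinv])
    obtain ⟨u1, u2⟩ := hp_int (p.1 x) h1' h2'
    rw [hPinv] at u1 u2
    exact hx ⟨le_of_lt u1, le_of_lt u2⟩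
  have hr_out : ∀ x, ¬(a ≤ x ∧ x ≤ b) → ¬(a ≤ rr x ∧ rr x ≤ b) := by
    intro x hx
    have hxa : x ≠ a := fun h => hx (by rw [h]; exact ⟨le_refl _, le_of_lt hab⟩)
    have hxb : x ≠ b := fun h => hx (by rw [h]; exact ⟨le_of_lt hab, le_refl _⟩)
    by_cases h3 : x = p.1 a
    · rw [h3, hr_Pa]; exact hPb_out
    by_cases h4 : x = p.1 b
    · rw [h4, hr_Pb]; exact hPa_out
    rw [hr_ne x hxa hxb h3 h4]
    exact hP_out x hx h3 h4
  -- non-crossing of rr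
  have hr_nc : ∀ x y : Fin (2*k), x < y → y < rr x → x < rr y ∧ rr y < rr x := by
    intro x y hxy hyrx
    by_cases hxin : a ≤ x ∧ x ≤ b
    · -- Case A : x ∈ [a,b]
      have hrxin := hr_in x hxin.1 hxin.2
      have hy1 : a < y := lt_of_le_of_lt hxin.1 hxy
      have hy2 : y < b := lt_of_lt_of_le hyrx hrxin.2
      have hy3 : y ≠ p.1 a := fun h => hPa_out (by rw [← h]; exact ⟨le_of_lt hy1, le_of_lt hy2⟩)
      have hy4 : y ≠ p.1 b := fun h => hPb_out (by rw [← h]; exact ⟨le_of_lt hy1, le_of_lt hy2⟩)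
      have hry : rr y = q.1 y := by
        rw [hr_ne y (ne_of_gt hy1) (ne_of_lt hy2) hy3 hy4, hpq_int y hy1 hy2]
      by_cases hxa : x = a
      · subst hxa
        rw [hr_a, hry]
        exact hq_int y hy1 hy2
      · have hx1 : a < x := lt_of_le_of_ne hxin.1 (fun h => hxa h.symm)
        have hx2 : x < b := lt_trans hxy hy2
        have hx3 : x ≠ p.1 a := fun h => hPa_out (by rw [← h]; exact ⟨hxin.1, hxin.2⟩)
        have hx4 : x ≠ p.1 b := fun h => hPb_out (by rw [← h]; exact ⟨hxin.1, hxin.2⟩)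
        have hrx : rr x = q.1 x := by
          rw [hr_ne x hxa (ne_of_lt hx2) hx3 hx4, hpq_int x hx1 hx2]
        rw [hrx] at hyrx
        rw [hry, hrx]
        exact nc_between hQnc hQinv hxy hyrx
    · have hxa : x ≠ a := fun h => hxin (by rw [h]; exact ⟨le_refl _, le_of_lt hab⟩)
      have hxb : x ≠ b := fun h => hxin (by rw [h]; exact ⟨le_of_lt hab, le_refl _⟩)
      by_cases hxpa : x = p.1 a
      · -- Case B : x = p.1 a, partner p.1 b
        subst hxpa
        rw [hr_Pa] at hyrx
        rw [hr_Pa]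
        by_cases hyin : a ≤ y ∧ y ≤ b
        · have hu : p.1 a < a := by
            rcases not_and_or.mp hPa_out with h | h
            · exact lt_of_not_ge h
            · exact absurd (lt_of_le_of_lt hyin.2 (lt_of_not_ge h)) (not_lt.mpr (le_of_lt hxy))
          have hv : b < p.1 b := by
            rcases not_and_or.mp hPb_out with h | h
            · exact absurd (lt_of_lt_of_le (lt_of_not_ge h) hyin.1) (not_lt.mpr (le_of_lt hyrx))
            · exact lt_of_not_ge h
          have hryin := hr_in y hyin.1 hyin.2
          exact ⟨lt_of_lt_of_le hu hryin.1, lt_of_le_of_lt hryin.2 hv⟩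
        · have hya : y ≠ a := fun h => hyin (by rw [h]; exact ⟨le_refl _, le_of_lt hab⟩)
          have hyb : y ≠ b := fun h => hyin (by rw [h]; exact ⟨le_of_lt hab, le_refl _⟩)
          have hypa : y ≠ p.1 a := ne_of_gt hxy
          have hypb : y ≠ p.1 b := ne_of_lt hyrx
          rw [hr_ne y hya hyb hypa hypb]
          constructor
          · by_contra hcon
            have h1 : p.1 y < p.1 a :=
              lt_of_le_of_ne (not_lt.mp hcon) (fun h => hya (p.1.injective h))
            have h2 := nc_between hPnc hPinv h1 (by rw [hPinv]; exact hxy)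
            simp only [hPinv] at h2
            rcases lt_trichotomy y b with hb1 | hb1 | hb1
            · exact hyin ⟨le_of_lt h2.2, le_of_lt hb1⟩
            · exact hyb hb1
            · have h3 := nc_between hPnc hPinv (lt_trans h2.1 hab) (by rw [hPinv]; exact hb1)
              simp only [hPinv] at h3
              exact absurd hyrx (not_lt.mpr (le_of_lt h3.2))
          · by_contra hcon
            have h1 : p.1 b < p.1 y :=
              lt_of_le_of_ne (not_lt.mp hcon) (fun h => hyb (p.1.injective h).symm)
            have h2 := nc_between hPnc hPinv hyrx h1
            simp only [hPinv] at h2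
            rcases lt_trichotomy a y with ha1 | ha1 | ha1
            · exact hyin ⟨le_of_lt ha1, le_of_lt h2.1⟩
            · exact hya ha1.symm
            · have h3 := nc_between hPnc hPinv ha1 (lt_trans hab h2.2)
              exact absurd hxy (not_lt.mpr (le_of_lt h3.1))
      · by_cases hxpb : x = p.1 b
        · -- Case B' : x = p.1 b, partner p.1 a
          subst hxpb
          rw [hr_Pb] at hyrx
          rw [hr_Pb]
          by_cases hyin : a ≤ y ∧ y ≤ b
          · have hu : p.1 b < a := by
              rcases not_and_or.mp hPb_out with h | h
              · exact lt_of_not_ge h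
              · exact absurd (lt_of_le_of_lt hyin.2 (lt_of_not_ge h)) (not_lt.mpr (le_of_lt hxy))
            have hv : b < p.1 a := by
              rcases not_and_or.mp hPa_out with h | h
              · exact absurd (lt_of_lt_of_le (lt_of_not_ge h) hyin.1) (not_lt.mpr (le_of_lt hyrx))
              · exact lt_of_not_ge h
            have hryin := hr_in y hyin.1 hyin.2
            exact ⟨lt_of_lt_of_le hu hryin.1, lt_of_le_of_lt hryin.2 hv⟩
          · have hya : y ≠ a := fun h => hyin (by rw [h]; exact ⟨le_refl _, le_of_lt hab⟩)
            have hyb : y ≠ b := fun h => hyin (by rw [h]; exact ⟨le_of_lt hab, le_refl _⟩)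
            have hypb : y ≠ p.1 b := ne_of_gt hxy
            have hypa : y ≠ p.1 a := ne_of_lt hyrx
            rw [hr_ne y hya hyb hypa hypb]
            constructor
            · by_contra hcon
              have h1 : p.1 y < p.1 b :=
                lt_of_le_of_ne (not_lt.mp hcon) (fun h => hyb (p.1.injective h))
              have h2 := nc_between hPnc hPinv h1 (by rw [hPinv]; exact hxy)
              simp only [hPinv] at h2
              rcases lt_trichotomy a (p.1 y) with ha1 | ha1 | ha1
              · have h4 := hp_int (p.1 y) ha1 h2.1
                simp only [hPinv] at h4
                exact absurd h4.2 (not_lt.mpr (le_of_lt h2.2))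
              · have h5 := congrArg p.1 ha1
                simp only [hPinv] at h5
                exact absurd hyrx (by rw [h5]; exact lt_irrefl y)
              · have h3 := nc_between hPnc hPinv ha1 (by rw [hPinv]; exact lt_trans hab h2.2)
                simp only [hPinv] at h3
                exact absurd hyrx (not_lt.mpr (le_of_lt h3.2))
            · by_contra hcon
              have h1 : p.1 a < p.1 y :=
                lt_of_le_of_ne (not_lt.mp hcon) (fun h => hya (p.1.injective h).symm)
              have h2 := nc_between hPnc hPinv hyrx h1
              simp only [hPinv] at h2
              rcases lt_trichotomy b (p.1 y) with hb1 | hb1 | hb1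
              · have h3 := nc_between hPnc hPinv (lt_trans h2.1 hab) hb1
                exact absurd hxy (not_lt.mpr (le_of_lt h3.1))
              · have h5 := congrArg p.1 hb1
                simp only [hPinv] at h5
                exact absurd hxy (by rw [h5]; exact lt_irrefl y)
              · have h4 := hp_int (p.1 y) h2.2 hb1
                simp only [hPinv] at h4
                exact absurd h4.1 (not_lt.mpr (le_of_lt h2.1))
        · -- Case C : x outside, not an endpoint of the special strings
          have hrx : rr x = p.1 x := hr_ne x hxa hxb hxpa hxpb
          rw [hrx] at hyrx
          rw [hrx]
          have hPxout : ¬(a ≤ p.1 x ∧ p.1 x ≤ b) := hP_out x hxin hxpa hxpb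
          by_cases hyin : a ≤ y ∧ y ≤ b
          · have hx_a : x < a := by
              rcases not_and_or.mp hxin with h | h
              · exact lt_of_not_ge h
              · exact absurd (lt_of_le_of_lt hyin.2 (lt_of_not_ge h)) (not_lt.mpr (le_of_lt hxy))
            have hb_Px : b < p.1 x := by
              rcases not_and_or.mp hPxout with h | h
              · exact absurd (lt_of_lt_of_le (lt_of_not_ge h) hyin.1) (not_lt.mpr (le_of_lt hyrx))
              · exact lt_of_not_ge h
            have hryin := hr_in y hyin.1 hyin.2
            exact ⟨lt_of_lt_of_le hx_a hryin.1, lt_of_le_of_lt hryin.2 hb_Px⟩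
          · by_cases hypa : y = p.1 a
            · subst hypa
              have h2 := nc_between hPnc hPinv hxy hyrx
              simp only [hPinv] at h2
              have hb_Px : b < p.1 x := by
                rcases lt_trichotomy (p.1 x) b with h | h | h
                · have h4 := hp_int (p.1 x) h2.2 h
                  simp only [hPinv] at h4
                  exact absurd h4.1 (not_lt.mpr (le_of_lt h2.1))
                · exact absurd ⟨le_of_lt h2.2, le_of_eq h⟩ hPxout
                · exact h
              have h5 := nc_between hPnc hPinv (lt_trans h2.1 hab) hb_Px
              rw [hr_Pa]
              exact h5
            · by_cases hypb : y = p.1 b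
              · subst hypb
                have h2 := nc_between hPnc hPinv hxy hyrx
                simp only [hPinv] at h2
                have hx_a : x < a := by
                  rcases lt_trichotomy x a with h | h | h
                  · exact h
                  · exact absurd h hxa
                  · exact absurd ⟨le_of_lt h, le_of_lt h2.1⟩ hxin
                have h5 := nc_between hPnc hPinv hx_a (lt_trans hab h2.2)
                rw [hr_Pb]
                exact h5
              · have hya : y ≠ a := fun h => hyin (by rw [h]; exact ⟨le_refl _, le_of_lt hab⟩)
                have hyb : y ≠ b := fun h => hyin (by rw [h]; exact ⟨le_of_lt hab, le_refl _⟩)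
                rw [hr_ne y hya hyb hypa hypb]
                exact nc_between hPnc hPinv hxy hyrx
  -- the new non-crossing pairing
  set r : NCPair k := ⟨rr, hr_inv, hr_fp, nc_of_between hr_nc⟩ with hrdef
  have hr1 : r.1 = rr := by rw [hrdef]
  have hpr_ne : p ≠ r := by
    intro h
    have h2 : p.1 a = r.1 a := by rw [h]
    rw [hr1, hr_a] at h2
    exact hPa h2
  have hcount1 : loops p r = k - 1 := by
    classical
    have hub := loops_lt hpr_ne
    have hrinv1 : ∀ x, r.1 (r.1 x) = x := by rw [hr1]; exact hr_inv
    have hSinv : ∀ σ ∈ ({p.1, r.1} : Set (Perm (Fin (2*k)))), σ⁻¹ = σ := by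
      rintro σ (rfl | hσ)
      · exact inv_eq_self hPinv
      · rw [Set.mem_singleton_iff] at hσ
        subst hσ
        exact inv_eq_self hrinv1
    have hmemP : p.1 ∈ ({p.1, r.1} : Set (Perm (Fin (2*k)))) := Set.mem_insert _ _
    have hmemR : r.1 ∈ ({p.1, r.1} : Set (Perm (Fin (2*k)))) := Set.mem_insert_of_mem _ rfl
    have hFinvar : ∀ σ ∈ ({p.1, r.1} : Set (Perm (Fin (2*k)))),
        (∀ x ∈ ({a, b, p.1 a, p.1 b} : Set (Fin (2*k))),
            σ x ∈ ({a, b, p.1 a, p.1 b} : Set (Fin (2*k)))) ∧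
        (∀ x ∈ ({a, b, p.1 a, p.1 b} : Set (Fin (2*k))),
            σ⁻¹ x ∈ ({a, b, p.1 a, p.1 b} : Set (Fin (2*k)))) := by
      intro σ hσ
      have hσ2 := hσ
      have hmaps : ∀ x ∈ ({a, b, p.1 a, p.1 b} : Set (Fin (2*k))),
          σ x ∈ ({a, b, p.1 a, p.1 b} : Set (Fin (2*k))) := by
        rcases hσ2 with rfl | hσ3
        · rintro x (rfl | rfl | rfl | rfl)
          · simp
          · simp
          · rw [hPinv]; simp
          · rw [hPinv]; simp
        · rw [Set.mem_singleton_iff] at hσ3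
          subst hσ3
          rintro x (rfl | rfl | rfl | rfl)
          · rw [hr1, hr_a]; simp
          · rw [hr1, hr_b]; simp
          · rw [hr1, hr_Pa]; simp
          · rw [hr1, hr_Pb]; simp
      exact ⟨hmaps, fun x hx => by rw [hSinv σ hσ]; exact hmaps x hx⟩
    have horb_notF : ∀ x : Fin (2*k), x ∉ ({a, b, p.1 a, p.1 b} : Set (Fin (2*k))) →
        MulAction.orbit (↥(Subgroup.closure ({p.1, r.1} : Set (Perm (Fin (2*k)))))) x
          = {x, p.1 x} := by
      intro x hx
      have hx' : x ≠ a ∧ x ≠ b ∧ x ≠ p.1 a ∧ x ≠ p.1 b := by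
        simp only [Set.mem_insert_iff, Set.mem_singleton_iff, not_or] at hx
        exact hx
      obtain ⟨h1, h2, h3, h4⟩ := hx'
      obtain ⟨k1, k2, k3, k4⟩ := hP_ne x h1 h2 h3 h4
      apply Set.Subset.antisymm
      · refine orbit_subset_of_invariant ?_ (Set.mem_insert _ _)
        intro σ hσ
        have hσ2 := hσ
        have hmaps2 : ∀ z ∈ ({x, p.1 x} : Set (Fin (2*k))),
            σ z ∈ ({x, p.1 x} : Set (Fin (2*k))) := by
          rcases hσ2 with rfl | hσ3
          · rintro z (rfl | rfl)
            · simp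
            · rw [hPinv]; simp
          · rw [Set.mem_singleton_iff] at hσ3
            subst hσ3
            rintro z (rfl | rfl)
            · rw [hr1, hr_ne z h1 h2 h3 h4]; simp
            · rw [hr1, hr_ne _ k1 k2 k3 k4, hPinv]; simp
        exact ⟨hmaps2, fun z hz => by rw [hSinv σ hσ]; exact hmaps2 z hz⟩
      · rw [Set.insert_subset_iff, Set.singleton_subset_iff]
        exact ⟨MulAction.mem_orbit_self _, gen_mem_orbit hmemP x⟩
    have horbF : MulAction.orbit
          (↥(Subgroup.closure ({p.1, r.1} : Set (Perm (Fin (2*k)))))) a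
        = ({a, b, p.1 a, p.1 b} : Set (Fin (2*k))) := by
      apply Set.Subset.antisymm
      · exact orbit_subset_of_invariant hFinvar (Set.mem_insert _ _)
      · have e1 : p.1 a ∈ MulAction.orbit
            (↥(Subgroup.closure ({p.1, r.1} : Set (Perm (Fin (2*k)))))) a :=
          gen_mem_orbit hmemP a
        have e2 : b ∈ MulAction.orbit
            (↥(Subgroup.closure ({p.1, r.1} : Set (Perm (Fin (2*k)))))) a := by
          rw [← hr_a, ← hr1]
          exact gen_mem_orbit hmemR a
        have e3 : p.1 b ∈ MulAction.orbit
            (↥(Subgroup.closure ({p.1, r.1} : Set (Perm (Fin (2*k)))))) a := by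
          have e4 : r.1 (p.1 a) ∈ MulAction.orbit
              (↥(Subgroup.closure ({p.1, r.1} : Set (Perm (Fin (2*k)))))) (p.1 a) :=
            gen_mem_orbit hmemR _
          rw [hr1, hr_Pa] at e4
          exact orbit_trans e4 e1
        rintro x (rfl | rfl | rfl | rfl)
        · exact MulAction.mem_orbit_self _
        · exact e2
        · exact e1
        · exact e3
    have hncF : ({a, b, p.1 a, p.1 b} : Set (Fin (2*k))).ncard = 4 := by
      rw [Set.ncard_insert_of_notMem (by simp [hne_ab, hne_aPa, hne_aPb]) (Set.toFinite _),
        Set.ncard_insert_of_notMem (by simp [hne_bPa, hne_bPb]) (Set.toFinite _),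
        Set.ncard_pair hne_PaPb]
    letI : Fintype (orbitRel.Quotient
        (↥(Subgroup.closure ({p.1, r.1} : Set (Perm (Fin (2*k)))))) (Fin (2*k))) :=
      Fintype.ofFinite _
    set ω₀ : orbitRel.Quotient
        (↥(Subgroup.closure ({p.1, r.1} : Set (Perm (Fin (2*k)))))) (Fin (2*k)) :=
      Quotient.mk'' a with hω₀
    have hsz0 : Nat.card ω₀.orbit = 4 := by
      have he : ω₀.orbit = ({a, b, p.1 a, p.1 b} : Set (Fin (2*k))) := by
        rw [hω₀, orbitRel.Quotient.orbit_mk, horbF]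
      rw [he, Nat.card_coe_set_eq, hncF]
    have hsz2 : ∀ ω, ω ≠ ω₀ → Nat.card ω.orbit = 2 := by
      intro ω hω
      have hout := out_mem_orbit ω
      have horb := quot_orbit_eq hout
      have hnotF : Quotient.out ω ∉ ({a, b, p.1 a, p.1 b} : Set (Fin (2*k))) := by
        intro hmem
        apply hω
        have hoa : Quotient.out ω ∈ MulAction.orbit
            (↥(Subgroup.closure ({p.1, r.1} : Set (Perm (Fin (2*k)))))) a := by
          rw [horbF]; exact hmem
        have hmk : (Quotient.mk'' (Quotient.out ω) :
            orbitRel.Quotient (↥(Subgroup.closure ({p.1, r.1} : Set (Perm (Fin (2*k))))))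
              (Fin (2*k))) = ω := Quotient.out_eq' ω
        rw [hω₀, ← hmk]
        exact Quotient.sound' (MulAction.orbitRel_apply.mpr hoa)
      have he : ω.orbit = ({Quotient.out ω, p.1 (Quotient.out ω)} : Set (Fin (2*k))) := by
        rw [horb, horb_notF _ hnotF]
      rw [he, Nat.card_coe_set_eq, Set.ncard_pair (Ne.symm (hPfp _))]
    have hkey := card_eq_of_orbit_sizes ω₀ hsz0 hsz2
    rw [Fintype.card_fin] at hkey
    have hld : loops p r = Nat.card (orbitRel.Quotient
        (↥(Subgroup.closure ({p.1, r.1} : Set (Perm (Fin (2*k)))))) (Fin (2*k))) :=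
      loops_def p r
    omega
  have hcount2 : loops r q = loops p q + 1 := by
    classical
    have hrinv1 : ∀ x, r.1 (r.1 x) = x := by rw [hr1]; exact hr_inv
    have hmemP' : p.1 ∈ ({p.1, q.1} : Set (Perm (Fin (2*k)))) := Set.mem_insert _ _
    have hmemQ' : q.1 ∈ ({p.1, q.1} : Set (Perm (Fin (2*k)))) := Set.mem_insert_of_mem _ rfl
    have hmemR2 : r.1 ∈ ({r.1, q.1} : Set (Perm (Fin (2*k)))) := Set.mem_insert _ _
    have hmemQ2 : q.1 ∈ ({r.1, q.1} : Set (Perm (Fin (2*k)))) := Set.mem_insert_of_mem _ rfl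
    -- each generator of ⟨r,q⟩ moves points within their ⟨p,q⟩ orbits
    have hgen : ∀ σ ∈ ({r.1, q.1} : Set (Perm (Fin (2*k)))), ∀ y : Fin (2*k),
        σ y ∈ MulAction.orbit
          (↥(Subgroup.closure ({p.1, q.1} : Set (Perm (Fin (2*k)))))) y ∧
        σ⁻¹ y ∈ MulAction.orbit
          (↥(Subgroup.closure ({p.1, q.1} : Set (Perm (Fin (2*k)))))) y := by
      intro σ hσ
      have hmoves : ∀ y : Fin (2*k), σ y ∈ MulAction.orbit
          (↥(Subgroup.closure ({p.1, q.1} : Set (Perm (Fin (2*k)))))) y := by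
        rcases hσ with rfl | hσ3
        · -- σ = r.1
          intro y
          have e1 : p.1 a ∈ MulAction.orbit
              (↥(Subgroup.closure ({p.1, q.1} : Set (Perm (Fin (2*k)))))) a :=
            gen_mem_orbit hmemP' a
          have e2 : b ∈ MulAction.orbit
              (↥(Subgroup.closure ({p.1, q.1} : Set (Perm (Fin (2*k)))))) a := by
            rw [← hQa]
            exact gen_mem_orbit hmemQ' a
          by_cases hy1 : y = a
          · rw [hy1, hr1, hr_a]
            exact e2
          by_cases hy2 : y = b
          · rw [hy2, hr1, hr_b, ← hQb]
            exact gen_mem_orbit hmemQ' b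
          by_cases hy3 : y = p.1 a
          · rw [hy3, hr1, hr_Pa]
            have e3 : p.1 b ∈ MulAction.orbit
                (↥(Subgroup.closure ({p.1, q.1} : Set (Perm (Fin (2*k)))))) b :=
              gen_mem_orbit hmemP' b
            exact orbit_trans (orbit_trans e3 e2) (orbit_symm e1)
          by_cases hy4 : y = p.1 b
          · rw [hy4, hr1, hr_Pb]
            have e3 : p.1 b ∈ MulAction.orbit
                (↥(Subgroup.closure ({p.1, q.1} : Set (Perm (Fin (2*k)))))) b :=
              gen_mem_orbit hmemP' b
            exact orbit_symm (orbit_trans (orbit_trans e3 e2) (orbit_symm e1))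
          · rw [hr1, hr_ne y hy1 hy2 hy3 hy4]
            exact gen_mem_orbit hmemP' y
        · rw [Set.mem_singleton_iff] at hσ3
          subst hσ3
          intro y
          exact gen_mem_orbit hmemQ' y
      intro y
      refine ⟨hmoves y, ?_⟩
      have hσinv : σ⁻¹ = σ := by
        rcases hσ with rfl | hσ3
        · exact inv_eq_self hrinv1
        · rw [Set.mem_singleton_iff] at hσ3
          subst hσ3
          exact inv_eq_self hQinv
      rw [hσinv]
      exact hmoves y
    have hrel := closure_orbit_sub hgen
    -- the projection between orbit spaces
    let ψ : orbitRel.Quotient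
          (↥(Subgroup.closure ({r.1, q.1} : Set (Perm (Fin (2*k)))))) (Fin (2*k)) →
        orbitRel.Quotient
          (↥(Subgroup.closure ({p.1, q.1} : Set (Perm (Fin (2*k)))))) (Fin (2*k)) :=
      fun ω => Quotient.liftOn' ω (fun x => Quotient.mk'' x) (by
        intro x y hxy
        obtain ⟨g, rfl⟩ := hxy
        exact Quotient.sound' (MulAction.orbitRel_apply.mpr ((hrel g g.2 y).1)))
    have hψsurj : Function.Surjective ψ := by
      intro ω
      induction ω using Quotient.inductionOn' with
      | h x => exact ⟨Quotient.mk'' x, rfl⟩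
    have hψeq : ψ (Quotient.mk'' a) = ψ (Quotient.mk'' (p.1 a)) := by
      have : (Quotient.mk'' a : orbitRel.Quotient
          (↥(Subgroup.closure ({p.1, q.1} : Set (Perm (Fin (2*k)))))) (Fin (2*k)))
          = Quotient.mk'' (p.1 a) :=
        Quotient.sound' (MulAction.orbitRel_apply.mpr (orbit_symm (gen_mem_orbit hmemP' a)))
      exact this
    have hQne : (Quotient.mk'' a : orbitRel.Quotient
        (↥(Subgroup.closure ({r.1, q.1} : Set (Perm (Fin (2*k)))))) (Fin (2*k)))
        ≠ Quotient.mk'' (p.1 a) := by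
      intro h
      have hrel2 := Quotient.exact' h
      have hmem2 : p.1 a ∈ MulAction.orbit
          (↥(Subgroup.closure ({r.1, q.1} : Set (Perm (Fin (2*k)))))) a :=
        orbit_symm (MulAction.orbitRel_apply.mp hrel2)
      have hIccInv : ∀ σ ∈ ({r.1, q.1} : Set (Perm (Fin (2*k)))),
          (∀ x ∈ {z : Fin (2*k) | a ≤ z ∧ z ≤ b}, σ x ∈ {z : Fin (2*k) | a ≤ z ∧ z ≤ b}) ∧
          (∀ x ∈ {z : Fin (2*k) | a ≤ z ∧ z ≤ b}, σ⁻¹ x ∈ {z : Fin (2*k) | a ≤ z ∧ z ≤ b}) := by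
        intro σ hσ
        have hmaps : ∀ x ∈ {z : Fin (2*k) | a ≤ z ∧ z ≤ b},
            σ x ∈ {z : Fin (2*k) | a ≤ z ∧ z ≤ b} := by
          rcases hσ with rfl | hσ3
          · intro x hx
            rw [hr1]
            exact hr_in x hx.1 hx.2
          · rw [Set.mem_singleton_iff] at hσ3
            subst hσ3
            intro x hx
            exact hq_in x hx.1 hx.2
        refine ⟨hmaps, fun x hx => ?_⟩
        have hσinv : σ⁻¹ = σ := by
          rcases hσ with rfl | hσ3
          · exact inv_eq_self hrinv1
          · rw [Set.mem_singleton_iff] at hσ3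
            subst hσ3
            exact inv_eq_self hQinv
        rw [hσinv]
        exact hmaps x hx
      have hsub := orbit_subset_of_invariant hIccInv
        (⟨le_refl a, le_of_lt hab⟩ : a ∈ {z : Fin (2*k) | a ≤ z ∧ z ≤ b})
      exact hPa_out (hsub hmem2)
    have hninj : ¬ Function.Injective ψ := fun hinj => hQne (hinj hψeq)
    letI : Fintype (orbitRel.Quotient
        (↥(Subgroup.closure ({r.1, q.1} : Set (Perm (Fin (2*k)))))) (Fin (2*k))) :=
      Fintype.ofFinite _
    letI : Fintype (orbitRel.Quotient
        (↥(Subgroup.closure ({p.1, q.1} : Set (Perm (Fin (2*k)))))) (Fin (2*k))) :=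
      Fintype.ofFinite _
    have hlt := Fintype.card_lt_of_surjective_not_injective ψ hψsurj hninj
    have e1 : loops r q = Fintype.card (orbitRel.Quotient
        (↥(Subgroup.closure ({r.1, q.1} : Set (Perm (Fin (2*k)))))) (Fin (2*k))) := by
      rw [loops_def, Nat.card_eq_fintype_card]
    have e2 : loops p q = Fintype.card (orbitRel.Quotient
        (↥(Subgroup.closure ({p.1, q.1} : Set (Perm (Fin (2*k)))))) (Fin (2*k))) := by
      rw [loops_def, Nat.card_eq_fintype_card]
    have htri := loops_triangle p r q
    have hk1 : loops p q + 1 ≤ k := loops_lt hpq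
    omega
  exact ⟨r, hcount1, hcount2⟩

lemma chain_exists : ∀ m : ℕ, ∀ p q : NCPair k, p ≠ q → loopDist p q = m →
    ∃ P : Fin (m + 1) → NCPair k, P 0 = p ∧ P (Fin.last m) = q ∧
      ∀ i : Fin m, loopDist (P i.castSucc) (P i.succ) = 1 := by
  intro m
  induction m with
  | zero =>
      intro p q hpq hd
      exfalso
      have h1 := loops_lt hpq
      have h2 : loopDist p q = k - loops p q := rfl
      omega
  | succ m ih =>
      intro p q hpq hd
      obtain ⟨r, hr1, hr2⟩ := exists_step hpq
      have hk1 := loops_lt hpq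
      have hdd : loopDist p q = k - loops p q := rfl
      have hd' : loopDist r q = m := by
        have h3 : loopDist r q = k - loops r q := rfl
        omega
      by_cases hrq : r = q
      · have hqq : loops r q = k := by rw [hrq]; exact loops_self q
        have hm0 : m = 0 := by
          have h3 : loopDist r q = k - loops r q := rfl
          omega
        subst hm0
        refine ⟨Fin.cons p (fun _ => q), Fin.cons_zero _ _, ?_, ?_⟩
        · have hlast : (Fin.last (0 + 1)) = Fin.succ 0 := rfl
          rw [hlast, Fin.cons_succ]
        · intro i
          have hi : i = 0 := Fin.ext (Nat.lt_one_iff.mp i.isLt)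
          subst hi
          have hc : Fin.castSucc (0 : Fin 1) = 0 := rfl
          rw [hc, Fin.cons_zero]
          have hs : Fin.succ (0 : Fin 1) = 1 := rfl
          rw [hs]
          show loopDist p q = 1
          have h4 : loops p q = k - 1 := by rw [← hrq]; exact hr1
          omega
      · obtain ⟨P', hP0, hPl, hPs⟩ := ih r q hrq hd'
        refine ⟨Fin.cons p P', Fin.cons_zero _ _, ?_, ?_⟩
        · rw [← Fin.succ_last, Fin.cons_succ]
          exact hPl
        · intro i
          induction i using Fin.cases with
          | zero =>
              have hc : Fin.castSucc (0 : Fin (m + 1)) = 0 := rfl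
              rw [hc, Fin.cons_zero, Fin.cons_succ, hP0]
              show loopDist p r = 1
              have h4 : loopDist p r = k - loops p r := rfl
              omega
          | succ j =>
              rw [← Fin.succ_castSucc, Fin.cons_succ, Fin.cons_succ]
              exact hPs j

end Step

end NCAux

/-- For p ≠ q, the loop distance d(p,q) is the least l ≥ 1 such that p and q can
be joined by a chain p = p₀, p₁, …, p_l = q with d(p_{i-1}, p_i) = 1 at each step. -/
theorem loopDist_eq_min_chain_length (k : ℕ) (hk : 1 ≤ k) (p q : NCPair k)
    (hpq : p ≠ q) :
    IsLeast {l : ℕ | 1 ≤ l ∧ ∃ P : Fin (l + 1) → NCPair k,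
        P 0 = p ∧ P (Fin.last l) = q ∧
        ∀ i : Fin l, loopDist (P i.castSucc) (P i.succ) = 1}
      (loopDist p q) := by
  constructor
  · refine ⟨?_, ?_⟩
    · have h1 := NCAux.loops_lt hpq
      have h2 : loopDist p q = k - loops p q := rfl
      omega
    · obtain ⟨P, h0, hl, hs⟩ := NCAux.chain_exists (loopDist p q) p q hpq rfl
      exact ⟨P, h0, hl, hs⟩
  · rintro l ⟨hl1, P, h0, hl, hs⟩
    have key : ∀ i : Fin (l + 1), loopDist p (P i) ≤ (i : ℕ) := by
      intro i
      induction i using Fin.induction with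
      | zero =>
          rw [h0]
          have h1 : loops p p = k := NCAux.loops_self p
          show k - loops p p ≤ _
          omega
      | succ i ihi =>
          have htri := NCAux.loops_triangle p (P i.castSucc) (P i.succ)
          have hstep : loopDist (P i.castSucc) (P i.succ) = 1 := hs i
          have hstep' : k - loops (P i.castSucc) (P i.succ) = 1 := hstep
          have hb1 := NCAux.loops_le p (P i.castSucc)
          have hb2 := NCAux.loops_le p (P i.succ)
          have hb3 := NCAux.loops_le (P i.castSucc) (P i.succ)
          have ihi' : k - loops p (P i.castSucc) ≤ (i.castSucc : ℕ) := ihi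
          rw [Fin.coe_castSucc] at ihi'
          show k - loops p (P i.succ) ≤ (i.succ : ℕ)
          rw [Fin.val_succ]
          omega
    have hkey := key (Fin.last l)
    rw [hl] at hkey
    simpa using hkey
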